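/- The germs of the sequences n ↦ S_1(n) = ∑_{i=1}^n 1/i and n ↦ S_2(n) = ∑_{i=1}^n 1/i² are algebraically independent over the field of rational sequences, i.e., there is no nonzero polynomial P ∈ ℚ(n)[X,Y] with P(S_1(n), S_2(n)) = 0 for all sufficiently large n. -/

import Mathlib

/-- Nested harmonic sums over ℚ. -/
def S : List ℕ → ℕ → ℚ
  | [], _ => 1
  | a :: as, n => ∑ i ∈ Finset.Icc 1 n, (1 / (i : ℚ) ^ a) * S as i

/-- Evaluation of a rational function at a natural number (value 0 at poles). -/
noncomputable def evalR (f : RatFunc ℚ) (n : ℕ) : ℚ :=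
  RatFunc.eval (RingHom.id ℚ) (n : ℚ) f

open Polynomial Filter

noncomputable section Indep

abbrev GQ : Type := Filter.Germ (Filter.atTop : Filter ℕ) ℚ

/-- evaluation of polynomials as germs -/
def gpoly : ℚ[X] →+* GQ :=
  (Filter.Germ.coeRingHom _).comp (Pi.ringHom fun n : ℕ => Polynomial.evalRingHom ((n : ℚ)))

lemma gpoly_apply (p : ℚ[X]) : gpoly p = ((fun n : ℕ => p.eval (n : ℚ)) : ℕ → ℚ) := rfl

lemma eventually_eval_ne (p : ℚ[X]) (hp : p ≠ 0) :
    ∀ᶠ n : ℕ in atTop, p.eval (n : ℚ) ≠ 0 := by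
  obtain ⟨x₀, hx₀⟩ := p.exists_max_root hp
  obtain ⟨N, hN⟩ := exists_nat_gt x₀
  rw [eventually_atTop]
  refine ⟨N, fun n hn h => ?_⟩
  have := hx₀ _ h
  have : (N : ℚ) ≤ n := by exact_mod_cast hn
  linarith

lemma isUnit_gpoly {p : ℚ[X]} (hp : p ≠ 0) : IsUnit (gpoly p) := by
  rw [isUnit_iff_exists_inv]
  refine ⟨((fun n : ℕ => (p.eval (n : ℚ))⁻¹) : ℕ → ℚ), ?_⟩
  rw [gpoly_apply, ← Filter.Germ.coe_mul, ← Filter.Germ.coe_one, Filter.Germ.coe_eq]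
  filter_upwards [eventually_eval_ne p hp] with n hn
  exact mul_inv_cancel₀ hn

/-- Rational functions as germs of sequences. -/
def rho : RatFunc ℚ →+* GQ :=
  IsLocalization.lift (M := nonZeroDivisors ℚ[X]) (g := gpoly)
    (fun y => isUnit_gpoly (nonZeroDivisors.coe_ne_zero y))

@[simp] lemma rho_algebraMap (p : ℚ[X]) : rho (algebraMap ℚ[X] (RatFunc ℚ) p) = gpoly p :=
  IsLocalization.lift_eq _ _

lemma rho_injective : Function.Injective rho := rho.injective

/-- the shift on germs -/
def sg : GQ →+* GQ where
  toFun g := g.compTendsto (fun n : ℕ => n + 1) (tendsto_add_atTop_nat 1)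
  map_one' := rfl
  map_mul' a b := by
    induction a using Filter.Germ.inductionOn with | _ a =>
    induction b using Filter.Germ.inductionOn with | _ b =>
    rfl
  map_zero' := rfl
  map_add' a b := by
    induction a using Filter.Germ.inductionOn with | _ a =>
    induction b using Filter.Germ.inductionOn with | _ b =>
    rfl

lemma sg_coe (f : ℕ → ℚ) : sg (f : GQ) = ((fun n => f (n + 1)) : ℕ → ℚ) := rfl

/-- shift of polynomials: p(X) ↦ p(X+1) -/
def shp : ℚ[X] →+* ℚ[X] := Polynomial.eval₂RingHom Polynomial.C (X + Polynomial.C 1)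

lemma shp_apply (p : ℚ[X]) : shp p = p.comp (X + C 1) := rfl

lemma shp_ne_zero {p : ℚ[X]} (hp : p ≠ 0) : shp p ≠ 0 := by
  intro h
  apply hp
  have h2 : (shp p).comp (X - C 1) = 0 := by rw [h, zero_comp]
  rw [shp_apply, comp_assoc] at h2
  simpa using h2

/-- shift of rational functions -/
def sE : RatFunc ℚ →+* RatFunc ℚ :=
  IsLocalization.lift (M := nonZeroDivisors ℚ[X])
    (g := (algebraMap ℚ[X] (RatFunc ℚ)).comp shp)
    (fun y => by
      refine isUnit_iff_ne_zero.mpr ?_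
      simp only [RingHom.comp_apply]
      exact RatFunc.algebraMap_ne_zero (shp_ne_zero (nonZeroDivisors.coe_ne_zero y)))

@[simp] lemma sE_algebraMap (p : ℚ[X]) :
    sE (algebraMap ℚ[X] (RatFunc ℚ) p) = algebraMap ℚ[X] (RatFunc ℚ) (shp p) :=
  IsLocalization.lift_eq _ _

lemma sg_gpoly (p : ℚ[X]) : sg (gpoly p) = gpoly (shp p) := by
  rw [gpoly_apply, sg_coe, gpoly_apply]
  congr 1
  funext n
  rw [shp_apply, eval_comp]
  push_cast
  simp

/-- the shifts intertwine -/
lemma sg_rho (f : RatFunc ℚ) : sg (rho f) = rho (sE f) := by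
  have : sg.comp rho = rho.comp sE := by
    apply IsLocalization.ringHom_ext (nonZeroDivisors ℚ[X])
    refine RingHom.ext fun p => ?_
    simp only [RingHom.comp_apply, rho_algebraMap, sE_algebraMap, sg_gpoly]
  exact DFunLike.congr_fun this f

/-- the bridge: `rho` is the germ of `evalR` -/
lemma rho_eq_evalR (f : RatFunc ℚ) : rho f = ((evalR f : ℕ → ℚ) : GQ) := by
  have hd : f.denom ≠ 0 := f.denom_ne_zero
  have hu : IsUnit (gpoly f.denom) := isUnit_gpoly hd
  refine hu.mul_left_cancel ?_
  have h0 : algebraMap ℚ[X] (RatFunc ℚ) f.num = f * algebraMap ℚ[X] (RatFunc ℚ) f.denom :=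
    (div_eq_iff (RatFunc.algebraMap_ne_zero hd)).mp (RatFunc.num_div_denom f)
  have h1 : rho f * gpoly f.denom = gpoly f.num := by
    rw [← rho_algebraMap, ← map_mul, ← rho_algebraMap]
    exact congrArg rho h0.symm
  rw [mul_comm, h1, gpoly_apply, gpoly_apply, ← Filter.Germ.coe_mul, Filter.Germ.coe_eq]
  filter_upwards [eventually_eval_ne f.denom hd] with n hn
  show f.num.eval (n:ℚ) = f.denom.eval (n:ℚ) * evalR f n
  have he : evalR f n = f.num.eval (n:ℚ) / f.denom.eval (n:ℚ) := rfl
  rw [he]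
  field_simp


lemma X1_ne : (X + C 1 : ℚ[X]) ≠ 0 := by
  intro h
  simpa using congrArg (Polynomial.eval 0) h

lemma X1sq_ne : ((X + C 1) ^ 2 : ℚ[X]) ≠ 0 := pow_ne_zero _ X1_ne

/-- the increment of S₁ as a rational function -/
def aQ : RatFunc ℚ := (algebraMap ℚ[X] (RatFunc ℚ) (X + C 1))⁻¹
/-- the increment of S₂ as a rational function -/
def bQ : RatFunc ℚ := (algebraMap ℚ[X] (RatFunc ℚ) ((X + C 1) ^ 2))⁻¹

lemma rho_inv (p : ℚ[X]) (hp : p ≠ 0) :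
    rho (algebraMap ℚ[X] (RatFunc ℚ) p)⁻¹ =
      (((fun n : ℕ => (p.eval (n : ℚ))⁻¹) : ℕ → ℚ) : GQ) := by
  have hu := isUnit_gpoly hp
  refine hu.mul_left_cancel ?_
  have h1 : gpoly p * rho (algebraMap ℚ[X] (RatFunc ℚ) p)⁻¹ = 1 := by
    rw [← rho_algebraMap, ← map_mul,
      mul_inv_cancel₀ (RatFunc.algebraMap_ne_zero hp), map_one]
  rw [h1, gpoly_apply, ← Filter.Germ.coe_mul, ← Filter.Germ.coe_one, Filter.Germ.coe_eq]
  filter_upwards [eventually_eval_ne p hp] with n hn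
  show (1 : ℚ) = _
  exact (mul_inv_cancel₀ hn).symm

lemma rho_aQ : rho aQ = (((fun n : ℕ => ((n : ℚ) + 1)⁻¹) : ℕ → ℚ) : GQ) := by
  rw [aQ, rho_inv _ X1_ne]
  congr 1
  funext n
  simp

lemma rho_bQ : rho bQ = (((fun n : ℕ => (((n : ℚ) + 1) ^ 2)⁻¹) : ℕ → ℚ) : GQ) := by
  rw [bQ, rho_inv _ X1sq_ne]
  congr 1
  funext n
  simp

/-- germs of the harmonic sequences -/
def s1g : GQ := ((S [1] : ℕ → ℚ) : GQ)
def s2g : GQ := ((S [2] : ℕ → ℚ) : GQ)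

lemma S_cons (a : ℕ) (as : List ℕ) (n : ℕ) :
    S (a :: as) n = ∑ i ∈ Finset.Icc 1 n, (1 / (i : ℚ) ^ a) * S as i := rfl

lemma S_single_succ (a n : ℕ) : S [a] (n + 1) = S [a] n + ((n : ℚ) + 1)⁻¹ ^ a := by
  rw [S_cons, S_cons, Finset.sum_Icc_succ_top (Nat.le_add_left 1 n)]
  have : S [] (n + 1) = 1 := rfl
  rw [this]
  push_cast
  rw [mul_one, one_div, inv_pow]

lemma sg_s1g : sg s1g = s1g + rho aQ := by
  rw [s1g, sg_coe, rho_aQ, ← Filter.Germ.coe_add]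
  congr 1
  funext n
  simpa using S_single_succ 1 n

lemma sg_s2g : sg s2g = s2g + rho bQ := by
  rw [s2g, sg_coe, rho_bQ, ← Filter.Germ.coe_add]
  congr 1
  funext n
  show S [2] (n + 1) = S [2] n + (((n : ℚ) + 1) ^ 2)⁻¹
  rw [S_single_succ 2 n, inv_pow]

lemma sE_fixed {f : RatFunc ℚ} (h : sE f = f) : ∃ q : ℚ, f = RatFunc.C q := by
  have hg : sg (rho f) = rho f := by rw [sg_rho, h]
  rw [rho_eq_evalR, sg_coe, Filter.Germ.coe_eq, EventuallyEq, eventually_atTop] at hg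
  obtain ⟨N, hN⟩ := hg
  have hconst : ∀ n ≥ N, evalR f n = evalR f N := by
    intro n hn
    induction n, hn using Nat.le_induction with
    | base => rfl
    | succ n hn ih => rw [← ih, ← hN n hn]
  refine ⟨evalR f N, rho_injective ?_⟩
  rw [rho_eq_evalR, ← RatFunc.algebraMap_C, rho_algebraMap, gpoly_apply, Filter.Germ.coe_eq,
    EventuallyEq, eventually_atTop]
  exact ⟨N, fun n hn => by simpa using hconst n hn⟩


/-! ### The pole-counting lemma -/

/-- the linear polynomial `X + (j+1)` -/
def pk (j : ℕ) : ℚ[X] := X + C ((j : ℚ) + 1)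

lemma pk_ne (j : ℕ) : pk j ≠ 0 := by
  intro h
  have := congrArg (Polynomial.eval 0) h
  simp [pk] at this
  linarith [this]

lemma pk_natDegree (j : ℕ) : (pk j).natDegree = 1 := natDegree_X_add_C _

lemma pk_prime (j : ℕ) : Prime (pk j) := by
  have h := prime_X_sub_C (-((j : ℚ) + 1))
  have h2 : X - C (-((j : ℚ) + 1)) = pk j := by rw [map_neg, sub_neg_eq_add, pk]
  rwa [h2] at h

lemma pk_sub (i j : ℕ) : pk i - pk j = C ((i : ℚ) - j) := by
  have h : ((i : ℚ) - j) = ((i : ℚ) + 1) - ((j : ℚ) + 1) := by ring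
  rw [h, C_sub, pk, pk]
  ring

/-- the `j`-th term of the telescoped series -/
def tt (q1 q2 : ℚ) (j : ℕ) : RatFunc ℚ :=
  RatFunc.C q1 * (algebraMap ℚ[X] (RatFunc ℚ) (pk j))⁻¹ +
    RatFunc.C q2 * (algebraMap ℚ[X] (RatFunc ℚ) (pk j ^ 2))⁻¹

lemma tt_zero (q1 q2 : ℚ) : tt q1 q2 0 = RatFunc.C q1 * aQ + RatFunc.C q2 * bQ := by
  have : pk 0 = X + C 1 := by simp [pk]
  rw [tt, this, aQ, bQ]

lemma shp_pk (j : ℕ) : shp (pk j) = pk (j + 1) := by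
  rw [shp_apply, pk, pk, add_comp, X_comp, C_comp, add_assoc, ← C_add]
  push_cast
  ring_nf

lemma sE_C (q : ℚ) : sE (RatFunc.C q) = RatFunc.C q := by
  rw [← RatFunc.algebraMap_C, sE_algebraMap]
  congr 1
  rw [shp_apply, C_comp]

lemma sE_tt (q1 q2 : ℚ) (j : ℕ) : sE (tt q1 q2 j) = tt q1 q2 (j + 1) := by
  rw [tt, tt, map_add, map_mul, map_mul, sE_C, sE_C, map_inv₀, map_inv₀,
    sE_algebraMap, sE_algebraMap, map_pow, map_pow, shp_pk, map_pow]

lemma telescope (g : RatFunc ℚ) (q1 q2 : ℚ)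
    (h : sE g - g = RatFunc.C q1 * aQ + RatFunc.C q2 * bQ) (m : ℕ) :
    sE^[m] g - g = ∑ j ∈ Finset.range m, tt q1 q2 j := by
  induction m with
  | zero => simp
  | succ m ih =>
    have h1 : sE^[m + 1] g - g = sE (sE^[m] g - g) + (sE g - g) := by
      rw [map_sub, Function.iterate_succ_apply']
      ring
    rw [h1, ih, h, ← tt_zero, map_sum]
    simp_rw [sE_tt]
    exact (Finset.sum_range_succ' _ m).symm

lemma tt_eq (q1 q2 : ℚ) (j : ℕ) :
    tt q1 q2 j = algebraMap ℚ[X] (RatFunc ℚ) (C q1 * pk j + C q2) /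
      algebraMap ℚ[X] (RatFunc ℚ) (pk j ^ 2) := by
  have h1 : algebraMap ℚ[X] (RatFunc ℚ) (pk j) ≠ 0 := RatFunc.algebraMap_ne_zero (pk_ne j)
  rw [tt, map_add, map_mul, map_pow, RatFunc.algebraMap_C, RatFunc.algebraMap_C]
  field_simp

lemma denom_tt_dvd (q1 q2 : ℚ) (j : ℕ) : (tt q1 q2 j).denom ∣ pk j ^ 2 := by
  rw [tt_eq]
  exact RatFunc.denom_div_dvd _ _

lemma dvd_denom_tt (q1 q2 : ℚ) (hq : ¬(q1 = 0 ∧ q2 = 0)) (j : ℕ) :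
    pk j ∣ (tt q1 q2 j).denom := by
  set N : ℚ[X] := C q1 * pk j + C q2 with hNdef
  have hN : N ≠ 0 := by
    intro h0
    rw [hNdef] at h0
    have h2 : q2 = 0 := by
      have h := congrArg (Polynomial.eval (-((j : ℚ) + 1))) h0
      simp [pk] at h
      linarith [h]
    have h1 : q1 = 0 := by
      rw [h2, C_0, add_zero, mul_eq_zero] at h0
      rcases h0 with h0 | h0
      · exact C_eq_zero.mp h0
      · exact absurd h0 (pk_ne j)
    exact hq ⟨h1, h2⟩
  by_contra hnd
  have key : (tt q1 q2 j).num * pk j ^ 2 = N * (tt q1 q2 j).denom :=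
    (RatFunc.num_mul_eq_mul_denom_iff (pow_ne_zero _ (pk_ne j))).mpr (tt_eq q1 q2 j)
  have hdvd : pk j ^ 2 ∣ N * (tt q1 q2 j).denom := ⟨(tt q1 q2 j).num, by rw [← key]; ring⟩
  have h2 : pk j ^ 2 ∣ N := (pk_prime j).pow_dvd_of_dvd_mul_right 2 hnd hdvd
  have h3 : (pk j ^ 2).natDegree ≤ N.natDegree := natDegree_le_of_dvd h2 hN
  have h4 : (pk j ^ 2).natDegree = 2 := by rw [natDegree_pow, pk_natDegree]
  have h5 : N.natDegree ≤ 1 := by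
    refine (natDegree_add_le _ _).trans ?_
    simp only [natDegree_C, max_le_iff]
    exact ⟨(natDegree_C_mul_le _ _).trans (le_of_eq (pk_natDegree j)), Nat.zero_le 1⟩
  omega

lemma not_dvd_denom_tt (q1 q2 : ℚ) {i j : ℕ} (hij : i ≠ j) :
    ¬ pk j ∣ (tt q1 q2 i).denom := by
  intro h
  have h1 : pk j ∣ pk i ^ 2 := h.trans (denom_tt_dvd q1 q2 i)
  have h2 : pk j ∣ pk i := (pk_prime j).dvd_of_dvd_pow h1
  have h3 : pk j ∣ C ((i : ℚ) - j) := pk_sub i j ▸ dvd_sub h2 dvd_rfl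
  have h4 : (C ((i : ℚ) - j) : ℚ[X]) ≠ 0 := by
    rw [Ne, C_eq_zero, sub_eq_zero]
    exact_mod_cast fun hc => hij (Nat.cast_injective hc)
  have := natDegree_le_of_dvd h3 h4
  rw [pk_natDegree, natDegree_C] at this
  omega

lemma denom_neg_dvd (y : RatFunc ℚ) : (-y).denom ∣ y.denom := by
  rw [RatFunc.denom_dvd y.denom_ne_zero]
  exact ⟨-y.num, by rw [map_neg, neg_div, RatFunc.num_div_denom]⟩

lemma denom_sub_dvd (x y : RatFunc ℚ) : (x - y).denom ∣ x.denom * y.denom := by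
  rw [sub_eq_add_neg]
  exact (RatFunc.denom_add_dvd x (-y)).trans (mul_dvd_mul_left _ (denom_neg_dvd y))

lemma prime_dvd_denom_add {x y : RatFunc ℚ} {p : ℚ[X]} (hp : Prime p)
    (hx : p ∣ x.denom) (hy : ¬ p ∣ y.denom) : p ∣ (x + y).denom := by
  have hxy : x = (x + y) - y := by ring
  have h1 : x.denom ∣ (x + y).denom * y.denom := by
    conv_lhs => rw [hxy]
    exact denom_sub_dvd _ _
  rcases (hp.dvd_mul).mp (hx.trans h1) with h | h
  · exact h
  · exact absurd h hy

lemma denom_sum_dvd {ι : Type} (s : Finset ι) (f : ι → RatFunc ℚ) :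
    (∑ i ∈ s, f i).denom ∣ ∏ i ∈ s, (f i).denom := by
  classical
  induction s using Finset.induction_on with
  | empty => simp
  | insert a s' ha ih =>
    rw [Finset.sum_insert ha, Finset.prod_insert ha]
    exact (RatFunc.denom_add_dvd _ _).trans (mul_dvd_mul_left _ ih)

lemma sE_denom_natDegree_le (x : RatFunc ℚ) :
    (sE x).denom.natDegree ≤ x.denom.natDegree := by
  have hx : sE x = algebraMap ℚ[X] (RatFunc ℚ) (shp x.num) /
      algebraMap ℚ[X] (RatFunc ℚ) (shp x.denom) := by
    conv_lhs => rw [← RatFunc.num_div_denom x]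
    rw [map_div₀, sE_algebraMap, sE_algebraMap]
  have h1 : (sE x).denom ∣ shp x.denom := by
    rw [hx]
    exact RatFunc.denom_div_dvd _ _
  have h2 := natDegree_le_of_dvd h1 (shp_ne_zero x.denom_ne_zero)
  refine h2.trans (le_of_eq ?_)
  rw [shp_apply, natDegree_comp, natDegree_X_add_C, mul_one]

lemma iter_denom_natDegree_le (g : RatFunc ℚ) (k : ℕ) :
    (sE^[k] g).denom.natDegree ≤ g.denom.natDegree := by
  induction k with
  | zero => exact le_rfl
  | succ k ih =>
    rw [Function.iterate_succ_apply']
    exact (sE_denom_natDegree_le _).trans ih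

lemma pk_coprime {i j : ℕ} (hij : i ≠ j) : IsCoprime (pk i) (pk j) := by
  have hne : (i : ℚ) - j ≠ 0 := by
    rw [sub_ne_zero]
    exact_mod_cast fun hc => hij (Nat.cast_injective hc)
  refine ⟨C (((i : ℚ) - j)⁻¹), -C (((i : ℚ) - j)⁻¹), ?_⟩
  have h1 : C (((i : ℚ) - j)⁻¹) * pk i + -C (((i : ℚ) - j)⁻¹) * pk j =
      C (((i : ℚ) - j)⁻¹) * (pk i - pk j) := by ring
  rw [h1, pk_sub, ← C_mul, inv_mul_cancel₀ hne, C_1]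

/-- The key pole-counting lemma: no rational function has difference equal to a
nontrivial rational combination of `1/(X+1)` and `1/(X+1)²`. -/
lemma pole_lemma (g : RatFunc ℚ) (q1 q2 : ℚ)
    (h : sE g - g = RatFunc.C q1 * aQ + RatFunc.C q2 * bQ) : q1 = 0 ∧ q2 = 0 := by
  by_contra hq
  set m : ℕ := 2 * g.denom.natDegree + 1 with hm
  set Γ : RatFunc ℚ := sE^[m] g - g with hΓdef
  have hΓ : Γ = ∑ j ∈ Finset.range m, tt q1 q2 j := telescope g q1 q2 h m
  -- lower bound on the degree of the denominator
  have hdvd : ∀ j ∈ Finset.range m, pk j ∣ Γ.denom := by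
    intro j hj
    have hsplit : ∑ i ∈ Finset.range m, tt q1 q2 i =
        tt q1 q2 j + ∑ i ∈ (Finset.range m).erase j, tt q1 q2 i :=
      (Finset.add_sum_erase _ _ hj).symm
    rw [hΓ, hsplit]
    refine prime_dvd_denom_add (pk_prime j) (dvd_denom_tt q1 q2 hq j) ?_
    intro hcon
    obtain ⟨i, hi, hdi⟩ := (pk_prime j).exists_mem_finset_dvd
      (hcon.trans (denom_sum_dvd _ _))
    exact not_dvd_denom_tt q1 q2 (Finset.ne_of_mem_erase hi) hdi
  have hprod : (∏ j ∈ Finset.range m, pk j) ∣ Γ.denom := by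
    refine Finset.prod_dvd_of_coprime ?_ hdvd
    intro i hi j hj hij
    exact pk_coprime hij
  have hdeg1 : (∏ j ∈ Finset.range m, pk j).natDegree = m := by
    rw [natDegree_prod _ _ (fun j _ => pk_ne j)]
    simp [pk_natDegree]
  have hlow : m ≤ Γ.denom.natDegree := by
    rw [← hdeg1]
    exact natDegree_le_of_dvd hprod Γ.denom_ne_zero
  -- upper bound
  have hup : Γ.denom.natDegree ≤ 2 * g.denom.natDegree := by
    have h1 : Γ.denom ∣ (sE^[m] g).denom * g.denom := denom_sub_dvd _ _
    have h2 := natDegree_le_of_dvd h1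
      (mul_ne_zero (sE^[m] g).denom_ne_zero g.denom_ne_zero)
    rw [natDegree_mul (sE^[m] g).denom_ne_zero g.denom_ne_zero] at h2
    have := iter_denom_natDegree_le g m
    omega
  omega


/-! ### Generic substitution operator `p(X) ↦ p^F(X + r)` -/

section Subst

set_option linter.unusedSectionVars false

variable {A : Type*} [CommRing A] [Nontrivial A] (F : A →+* A) (r : A)

/-- substitution operator: apply `F` to coefficients and substitute `X + r` for `X`. -/
def Tg : Polynomial A →+* Polynomial A :=
  Polynomial.eval₂RingHom ((Polynomial.C : A →+* A[X]).comp F) (X + C r)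

lemma Tg_C (c : A) : Tg F r (C c) = C (F c) := by
  rw [Tg, coe_eval₂RingHom, eval₂_C, RingHom.comp_apply]

lemma Tg_X : Tg F r X = X + C r := by
  rw [Tg, coe_eval₂RingHom, eval₂_X]

lemma Tg_apply (p : A[X]) : Tg F r p =
    ∑ i ∈ Finset.range (p.natDegree + 1), C (F (p.coeff i)) * (X + C r) ^ i := by
  rw [Tg, coe_eval₂RingHom, eval₂_eq_sum_range]
  rfl

lemma XCr_pow_natDegree (i : ℕ) : ((X + C r) ^ i).natDegree = i := by
  rw [(monic_X_add_C r).natDegree_pow, natDegree_X_add_C, mul_one]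

lemma Tg_natDegree_le (p : A[X]) : (Tg F r p).natDegree ≤ p.natDegree := by
  rw [Tg_apply]
  refine natDegree_sum_le_of_forall_le _ _ ?_
  intro i hi
  refine (natDegree_C_mul_le _ _).trans ?_
  rw [XCr_pow_natDegree]
  exact Nat.lt_succ_iff.mp (Finset.mem_range.mp hi)

lemma Tg_coeff_top (p : A[X]) : (Tg F r p).coeff p.natDegree = F p.leadingCoeff := by
  rw [Tg_apply, finset_sum_coeff]
  rw [Finset.sum_eq_single p.natDegree]
  · rw [coeff_C_mul]
    have hm : ((X + C r) ^ p.natDegree).Monic := (monic_X_add_C r).pow _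
    have : ((X + C r) ^ p.natDegree).coeff p.natDegree = 1 := by
      have := hm.coeff_natDegree
      rwa [XCr_pow_natDegree] at this
    rw [this, mul_one, leadingCoeff]
  · intro i hi hne
    have hlt : i < p.natDegree :=
      lt_of_le_of_ne (Nat.lt_succ_iff.mp (Finset.mem_range.mp hi)) hne
    have hz : ((X + C r) ^ i).coeff p.natDegree = 0 := by
      apply coeff_eq_zero_of_natDegree_lt
      rwa [XCr_pow_natDegree]
    rw [coeff_C_mul, hz, mul_zero]
  · intro h
    exact absurd (Finset.self_mem_range_succ _) h

lemma Tg_coeff_sub_one (p : A[X]) (e : ℕ) (hd : p.natDegree = e + 1) :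
    (Tg F r p).coeff e = F (p.coeff e) + (e + 1 : A) * r * F p.leadingCoeff := by
  rw [Tg_apply, finset_sum_coeff, hd]
  rw [Finset.sum_range_succ, Finset.sum_range_succ]
  have h0 : ∀ i ∈ Finset.range e, (C (F (p.coeff i)) * (X + C r) ^ i).coeff e = 0 := by
    intro i hi
    have hz : ((X + C r) ^ i).coeff e = 0 := by
      apply coeff_eq_zero_of_natDegree_lt
      rw [XCr_pow_natDegree]
      exact Finset.mem_range.mp hi
    rw [coeff_C_mul, hz, mul_zero]
  rw [Finset.sum_eq_zero h0, zero_add, coeff_C_mul, coeff_C_mul]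
  have h1 : ((X + C r) ^ e).coeff e = 1 := by
    have := ((monic_X_add_C r).pow e).coeff_natDegree
    rwa [XCr_pow_natDegree] at this
  have h2 : ((X + C r) ^ (e + 1)).coeff e = (e + 1 : A) * r := by
    rw [coeff_X_add_C_pow, Nat.add_sub_cancel_left, pow_one, Nat.choose_succ_self_right]
    push_cast
    ring
  rw [h1, h2, mul_one, leadingCoeff, hd]
  ring

end Subst


/-! ### The inner step lemma -/

/-- inner substitution operator (variable corresponds to `S₂`) -/
def Tin : Polynomial (RatFunc ℚ) →+* Polynomial (RatFunc ℚ) := Tg sE bQ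

lemma stepW (c : Polynomial (RatFunc ℚ)) (q : ℚ)
    (h : Tin c - c = C (RatFunc.C q * aQ)) :
    q = 0 ∧ ∃ t : ℚ, c = C (RatFunc.C t) := by
  rcases Nat.eq_zero_or_pos c.natDegree with hm | hm
  · obtain ⟨w, rfl⟩ : ∃ w, c = C w := ⟨c.coeff 0, eq_C_of_natDegree_eq_zero hm⟩
    rw [Tin, Tg_C, ← C_sub] at h
    have hE : sE w - w = RatFunc.C q * aQ := C_injective h
    have hE' : sE w - w = RatFunc.C q * aQ + RatFunc.C 0 * bQ := by
      rw [map_zero, zero_mul, add_zero, hE]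
    obtain ⟨hq, -⟩ := pole_lemma w q 0 hE'
    refine ⟨hq, ?_⟩
    have hfix : sE w = w := by
      rw [hq, map_zero, zero_mul, sub_eq_zero] at hE
      exact hE
    obtain ⟨t, ht⟩ := sE_fixed hfix
    exact ⟨t, by rw [ht]⟩
  · exfalso
    obtain ⟨e, hd⟩ : ∃ e, c.natDegree = e + 1 := ⟨c.natDegree - 1, by omega⟩
    have hc0 : c ≠ 0 := fun h0 => by rw [h0] at hd; simp at hd
    -- the leading coefficient is a fixed point of the shift
    have htop : sE c.leadingCoeff = c.leadingCoeff := by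
      have h1 := congrArg (fun p => Polynomial.coeff p c.natDegree) h
      simp only [coeff_sub] at h1
      rw [Tin, Tg_coeff_top] at h1
      have h2 : (C (RatFunc.C q * aQ) : Polynomial (RatFunc ℚ)).coeff c.natDegree = 0 := by
        rw [coeff_C, if_neg (by omega)]
      rw [h2, ← leadingCoeff, sub_eq_zero] at h1
      exact h1
    obtain ⟨q0, hq0⟩ := sE_fixed htop
    have hq0ne : q0 ≠ 0 := by
      intro h0
      rw [h0, map_zero] at hq0
      exact leadingCoeff_ne_zero.mpr hc0 hq0
    -- the next coefficient gives a contradiction via the pole lemma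
    have hnext := congrArg (fun p => Polynomial.coeff p e) h
    simp only [coeff_sub] at hnext
    rw [Tin, Tg_coeff_sub_one sE bQ c e hd, htop, hq0] at hnext
    have hcast : ((e : RatFunc ℚ) + 1) = RatFunc.C ((e : ℚ) + 1) := by
      rw [map_add, map_one, map_natCast]
    have hcast2 : RatFunc.C (-(((e : ℚ) + 1) * q0)) =
        -(((e : RatFunc ℚ) + 1) * RatFunc.C q0) := by
      rw [map_neg, map_mul, hcast]
    have hene : ((e : ℚ) + 1) ≠ 0 := by positivity
    rcases Nat.eq_zero_or_pos e with he | he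
    · subst he
      rw [coeff_C_zero] at hnext
      have hp := pole_lemma (c.coeff 0) q (-((((0:ℕ) : ℚ) + 1) * q0)) ?_
      · obtain ⟨-, h2⟩ := hp
        rw [neg_eq_zero] at h2
        rcases mul_eq_zero.mp h2 with h3 | h3
        · norm_num at h3
        · exact hq0ne h3
      · rw [hcast2]
        push_cast
        linear_combination hnext
    · obtain ⟨e', rfl⟩ : ∃ e', e = e' + 1 := ⟨e - 1, by omega⟩
      rw [coeff_C, if_neg (by omega)] at hnext
      have hp := pole_lemma (c.coeff (e' + 1)) 0 (-((((e' : ℚ) + 1) + 1) * q0)) ?_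
      · obtain ⟨-, h2⟩ := hp
        rw [neg_eq_zero] at h2
        rcases mul_eq_zero.mp h2 with h3 | h3
        · have : ((e' : ℚ) + 1) + 1 > 0 := by positivity
          linarith
        · exact hq0ne h3
      · rw [map_zero, zero_mul, zero_add]
        have hcast3 : RatFunc.C (-((((e' : ℚ) + 1) + 1) * q0)) =
            -((((e' : RatFunc ℚ) + 1) + 1) * RatFunc.C q0) := by
          rw [map_neg, map_mul, map_add, map_add, map_one, map_natCast]
        rw [hcast3]
        push_cast at hnext ⊢
        linear_combination hnext


/-! ### Evaluation into germs and equivariance -/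

/-- evaluation of the inner polynomial ring at the germ of `S₂` -/
def ThIn : Polynomial (RatFunc ℚ) →+* GQ := Polynomial.eval₂RingHom rho s2g

/-- evaluation of the bivariate polynomial ring at the germs of `(S₁, S₂)` -/
def Th : Polynomial (Polynomial (RatFunc ℚ)) →+* GQ := Polynomial.eval₂RingHom ThIn s1g

/-- outer substitution operator (variable corresponds to `S₁`) -/
def Tout : Polynomial (Polynomial (RatFunc ℚ)) →+* Polynomial (Polynomial (RatFunc ℚ)) :=
  Tg Tin (C aQ)

lemma ThIn_C (r : RatFunc ℚ) : ThIn (C r) = rho r := eval₂_C _ _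
lemma ThIn_X : ThIn X = s2g := eval₂_X _ _
lemma Th_C (p : Polynomial (RatFunc ℚ)) : Th (C p) = ThIn p := eval₂_C _ _
lemma Th_X : Th X = s1g := eval₂_X _ _

lemma ThIn_Tin (p : Polynomial (RatFunc ℚ)) : ThIn (Tin p) = sg (ThIn p) := by
  have h : ThIn.comp Tin = sg.comp ThIn := by
    apply Polynomial.ringHom_ext
    · intro a
      rw [RingHom.comp_apply, RingHom.comp_apply, Tin, Tg_C, ThIn_C, ThIn_C, sg_rho]
    · rw [RingHom.comp_apply, RingHom.comp_apply, Tin, Tg_X, map_add, ThIn_X, ThIn_C,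
        sg_s2g]
  exact DFunLike.congr_fun h p

lemma Th_Tout (p : Polynomial (Polynomial (RatFunc ℚ))) : Th (Tout p) = sg (Th p) := by
  have h : Th.comp Tout = sg.comp Th := by
    apply Polynomial.ringHom_ext
    · intro a
      rw [RingHom.comp_apply, RingHom.comp_apply, Tout, Tg_C, Th_C, Th_C, ThIn_Tin]
    · rw [RingHom.comp_apply, RingHom.comp_apply, Tout, Tg_X, map_add, Th_X, Th_C,
        ThIn_C, sg_s1g]
  exact DFunLike.congr_fun h p

/-! ### The main structural argument -/

lemma no_poly_relation (P : Polynomial (Polynomial (RatFunc ℚ))) (hP : P ≠ 0) :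
    Th P ≠ 0 := by
  intro hTh
  classical
  have hex : ∃ d : ℕ, ∃ Q : Polynomial (Polynomial (RatFunc ℚ)),
      Q ≠ 0 ∧ Th Q = 0 ∧ Q.natDegree = d := ⟨P.natDegree, P, hP, hTh, rfl⟩
  set d0 := Nat.find hex with hd0def
  obtain ⟨Q1, hQ1ne, hQ1Th, hQ1d⟩ := Nat.find_spec hex
  have hex2 : ∃ e : ℕ, ∃ Q : Polynomial (Polynomial (RatFunc ℚ)),
      Q ≠ 0 ∧ Th Q = 0 ∧ Q.natDegree = d0 ∧ Q.leadingCoeff.natDegree = e :=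
    ⟨Q1.leadingCoeff.natDegree, Q1, hQ1ne, hQ1Th, hQ1d, rfl⟩
  set e0 := Nat.find hex2 with he0def
  obtain ⟨Q2, hne, hTh0, hdeg, hldeg⟩ := Nat.find_spec hex2
  -- normalize the polynomial to have monic-monic leading coefficient
  have hlc2 : Q2.leadingCoeff ≠ 0 := leadingCoeff_ne_zero.mpr hne
  set u : RatFunc ℚ := Q2.leadingCoeff.leadingCoeff with hu
  have hune : u ≠ 0 := leadingCoeff_ne_zero.mpr hlc2
  have hCu : (C u⁻¹ : Polynomial (RatFunc ℚ)) ≠ 0 := by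
    rw [Ne, C_eq_zero, inv_eq_zero]
    exact hune
  have hCCu : (C (C u⁻¹) : Polynomial (Polynomial (RatFunc ℚ))) ≠ 0 := by
    rw [Ne, C_eq_zero]
    exact hCu
  set P' := C (C u⁻¹) * Q2 with hP'
  have hP'ne : P' ≠ 0 := mul_ne_zero hCCu hne
  have hP'Th : Th P' = 0 := by rw [hP', map_mul, hTh0, mul_zero]
  have hP'deg : P'.natDegree = d0 := by
    rw [hP', natDegree_mul hCCu hne, natDegree_C, zero_add, hdeg]
  have hP'lc : P'.leadingCoeff = C u⁻¹ * Q2.leadingCoeff := by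
    rw [hP', leadingCoeff_mul, leadingCoeff_C]
  have hP'ldeg : P'.leadingCoeff.natDegree = e0 := by
    rw [hP'lc, natDegree_mul hCu hlc2, natDegree_C, zero_add, hldeg]
  have hP'monic : P'.leadingCoeff.leadingCoeff = 1 := by
    rw [hP'lc, leadingCoeff_mul, leadingCoeff_C, ← hu, inv_mul_cancel₀ hune]
  -- the difference polynomial vanishes
  set Qd := Tout P' - P' with hQd
  have hQdTh : Th Qd = 0 := by
    rw [hQd, map_sub, Th_Tout, hP'Th, map_zero, sub_zero]
  have hQdcoeff : Qd.coeff d0 = Tin P'.leadingCoeff - P'.leadingCoeff := by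
    rw [hQd, coeff_sub, ← hP'deg, Tout, Tg_coeff_top, ← leadingCoeff]
  have hQddeg : Qd.natDegree ≤ d0 := by
    rw [hQd]
    refine (natDegree_sub_le _ _).trans (max_le ?_ ?_)
    · exact (Tg_natDegree_le _ _ _).trans (le_of_eq hP'deg)
    · exact le_of_eq hP'deg
  have hQzero : Qd = 0 := by
    by_contra hQne
    rcases eq_or_ne (Qd.coeff d0) 0 with hc | hc
    · have hdne : Qd.natDegree ≠ d0 := by
        intro heq
        apply hQne
        apply leadingCoeff_eq_zero.mp
        rw [leadingCoeff, heq, hc]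
      exact Nat.find_min hex (lt_of_le_of_ne hQddeg hdne) ⟨Qd, hQne, hQdTh, rfl⟩
    · have hdeq : Qd.natDegree = d0 := le_antisymm hQddeg (le_natDegree_of_ne_zero hc)
      have hlc : Qd.leadingCoeff = Tin P'.leadingCoeff - P'.leadingCoeff := by
        rw [leadingCoeff, hdeq, hQdcoeff]
      have h1 : (Tin P'.leadingCoeff).coeff e0 = 1 := by
        rw [← hP'ldeg, Tin, Tg_coeff_top, hP'monic, map_one]
      have hle : Qd.leadingCoeff.natDegree ≤ e0 := by
        rw [hlc]
        refine (natDegree_sub_le _ _).trans (max_le ?_ ?_)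
        · exact (Tg_natDegree_le _ _ _).trans (le_of_eq hP'ldeg)
        · exact le_of_eq hP'ldeg
      have hcoeffe0 : Qd.leadingCoeff.coeff e0 = 0 := by
        rw [hlc, coeff_sub, h1]
        have h2 : P'.leadingCoeff.coeff e0 = 1 := by
          rw [← hP'ldeg, ← leadingCoeff]
          exact hP'monic
        rw [h2, sub_self]
      have hlcne0 : Qd.leadingCoeff ≠ 0 := leadingCoeff_ne_zero.mpr hQne
      have hene : Qd.leadingCoeff.natDegree ≠ e0 := by
        intro heq
        apply hlcne0
        apply leadingCoeff_eq_zero.mp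
        rw [leadingCoeff, heq, hcoeffe0]
      exact Nat.find_min hex2 (lt_of_le_of_ne hle hene) ⟨Qd, hQne, hQdTh, hdeq, rfl⟩
  have hfix : Tout P' = P' := by rwa [hQd, sub_eq_zero] at hQzero
  -- the leading coefficient is fixed by `Tin`, hence is the constant 1
  have htop : Tin P'.leadingCoeff = P'.leadingCoeff := by
    have h1 := congrArg (fun p => Polynomial.coeff p d0) hfix
    rw [← hP'deg, Tout, Tg_coeff_top, ← leadingCoeff] at h1
    exact h1
  obtain ⟨-, t, hlct⟩ := stepW P'.leadingCoeff 0
    (by rw [htop, sub_self, map_zero, zero_mul, map_zero])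
  have hlc1 : P'.leadingCoeff = 1 := by
    have h2 := hP'monic
    rw [hlct, leadingCoeff_C] at h2
    rw [hlct, h2, C_1]
  rcases Nat.eq_zero_or_pos d0 with hd00 | hd00
  · -- degree 0: the relation is `1 = 0` in the germ ring
    have hP1 : P' = 1 := by
      have h1 : P' = C (P'.coeff 0) := eq_C_of_natDegree_eq_zero (by rw [hP'deg, hd00])
      have h2 : P'.coeff 0 = P'.leadingCoeff := by rw [leadingCoeff, hP'deg, hd00]
      rw [h1, h2, hlc1, C_1]
    rw [hP1, map_one] at hP'Th
    exact one_ne_zero hP'Th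
  · -- degree ≥ 1: contradiction via the step lemma
    obtain ⟨e, hde⟩ : ∃ e, d0 = e + 1 := ⟨d0 - 1, by omega⟩
    have hsub := congrArg (fun p => Polynomial.coeff p e) hfix
    rw [Tout, Tg_coeff_sub_one Tin (C aQ) P' e (by rw [hP'deg, hde]), htop, hlc1,
      mul_one] at hsub
    -- hsub : Tin (P'.coeff e) + ((e : _) + 1) * C aQ = P'.coeff e
    have hkey : Tin (P'.coeff e) - P'.coeff e = C (RatFunc.C (-((e : ℚ) + 1)) * aQ) := by
      have hcast : ((e : Polynomial (RatFunc ℚ)) + 1) = C ((e : RatFunc ℚ) + 1) := by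
        rw [map_add, map_one, map_natCast]
      have hcast2 : RatFunc.C (-((e : ℚ) + 1)) = -((e : RatFunc ℚ) + 1) := by
        rw [map_neg, map_add, map_one, map_natCast]
      rw [hcast2, neg_mul, map_neg, map_mul, ← hcast]
      linear_combination hsub
    obtain ⟨hq, -⟩ := stepW (P'.coeff e) (-((e : ℚ) + 1)) hkey
    rw [neg_eq_zero] at hq
    have : ((e : ℚ) + 1) > 0 := by positivity
    rw [hq] at this
    exact lt_irrefl 0 this


/-! ### Transfer from the multivariate polynomial ring -/

/-- the canonical map `ℚ(n)[X₀,X₁] → ℚ(n)[X][Y]` -/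
def psi : MvPolynomial (Fin 2) (RatFunc ℚ) →+* Polynomial (Polynomial (RatFunc ℚ)) :=
  MvPolynomial.eval₂Hom ((Polynomial.C).comp (Polynomial.C))
    ![Polynomial.X, Polynomial.C Polynomial.X]

/-- inverse of `psi` -/
def chi : Polynomial (Polynomial (RatFunc ℚ)) →+* MvPolynomial (Fin 2) (RatFunc ℚ) :=
  Polynomial.eval₂RingHom
    (Polynomial.eval₂RingHom MvPolynomial.C (MvPolynomial.X 1)) (MvPolynomial.X 0)

lemma chi_psi : chi.comp psi = RingHom.id _ := by
  apply MvPolynomial.ringHom_ext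
  · intro r
    simp [psi, chi]
  · intro i
    fin_cases i <;> simp [psi, chi]

lemma psi_inj : Function.Injective psi := by
  intro x y hxy
  have h1 := DFunLike.congr_fun chi_psi x
  have h2 := DFunLike.congr_fun chi_psi y
  simp only [RingHom.comp_apply, RingHom.id_apply] at h1 h2
  rw [← h1, ← h2, hxy]

lemma Th_psi : Th.comp psi = MvPolynomial.eval₂Hom rho ![s1g, s2g] := by
  apply MvPolynomial.ringHom_ext
  · intro r
    simp only [RingHom.comp_apply, psi, MvPolynomial.eval₂Hom_C, RingHom.coe_comp,
      Function.comp_apply]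
    rw [Th_C, ThIn_C]
  · intro i
    fin_cases i
    · show Th (psi (MvPolynomial.X 0)) =
        (MvPolynomial.eval₂Hom rho ![s1g, s2g]) (MvPolynomial.X 0)
      rw [psi, MvPolynomial.eval₂Hom_X', MvPolynomial.eval₂Hom_X']
      show Th (![Polynomial.X, Polynomial.C Polynomial.X] 0) = ![s1g, s2g] 0
      simp only [Matrix.cons_val_zero]
      exact Th_X
    · show Th (psi (MvPolynomial.X 1)) =
        (MvPolynomial.eval₂Hom rho ![s1g, s2g]) (MvPolynomial.X 1)
      rw [psi, MvPolynomial.eval₂Hom_X', MvPolynomial.eval₂Hom_X']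
      show Th (![Polynomial.X, Polynomial.C Polynomial.X] 1) = ![s1g, s2g] 1
      simp only [Matrix.cons_val_one, Matrix.head_cons, Matrix.cons_val_zero]
      rw [Th_C, ThIn_X]

end Indep

/-- The sequences `S₁(n) = ∑_{i=1}^n 1/i` and `S₂(n) = ∑_{i=1}^n 1/i²` are
algebraically independent over the field of rational sequences: there is no
nonzero `P ∈ ℚ(n)[X,Y]` with `P(S₁(n), S₂(n)) = 0` for all sufficiently large `n`. -/
theorem S1_S2_algebraically_independent :
    ¬ ∃ P : MvPolynomial (Fin 2) (RatFunc ℚ), P ≠ 0 ∧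
      ∃ N : ℕ, ∀ n ≥ N,
        (∑ m ∈ P.support,
          evalR (MvPolynomial.coeff m P) n * (S [1] n) ^ (m 0) * (S [2] n) ^ (m 1)) = 0 := by
  rintro ⟨P, hP, N, h⟩
  have hPhi : MvPolynomial.eval₂ rho ![s1g, s2g] P = 0 := by
    rw [MvPolynomial.eval₂_eq']
    have hterm : ∀ m ∈ P.support,
        rho (MvPolynomial.coeff m P) * ∏ i, (![s1g, s2g]) i ^ m i =
        (((fun n => evalR (MvPolynomial.coeff m P) n * (S [1] n) ^ (m 0) *
          (S [2] n) ^ (m 1)) : ℕ → ℚ) : GQ) := by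
      intro m _
      rw [Fin.prod_univ_two]
      show rho (MvPolynomial.coeff m P) * (s1g ^ m 0 * s2g ^ m 1) = _
      rw [rho_eq_evalR, s1g, s2g, ← Filter.Germ.coe_pow, ← Filter.Germ.coe_pow,
        ← Filter.Germ.coe_mul, ← Filter.Germ.coe_mul, Filter.Germ.coe_eq]
      filter_upwards with n
      show evalR (MvPolynomial.coeff m P) n * ((S [1]) ^ m 0 * (S [2]) ^ m 1) n = _
      simp only [Pi.mul_apply, Pi.pow_apply]
      ring
    rw [Finset.sum_congr rfl hterm]
    have hsum : (∑ m ∈ P.support,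
        (((fun n => evalR (MvPolynomial.coeff m P) n * (S [1] n) ^ (m 0) *
          (S [2] n) ^ (m 1)) : ℕ → ℚ) : GQ)) =
        (((fun n => ∑ m ∈ P.support, evalR (MvPolynomial.coeff m P) n * (S [1] n) ^ (m 0) *
          (S [2] n) ^ (m 1)) : ℕ → ℚ) : GQ) := by
      have hc : ∀ f : ℕ → ℚ,
          (Filter.Germ.coeRingHom (atTop : Filter ℕ)) f = (f : GQ) := fun _ => rfl
      simp_rw [← hc]
      rw [← map_sum]
      congr 1
      funext n
      rw [Finset.sum_apply]
    rw [hsum, ← Filter.Germ.coe_zero, Filter.Germ.coe_eq]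
    rw [EventuallyEq, eventually_atTop]
    exact ⟨N, fun n hn => by simpa using h n hn⟩
  have hpsine : psi P ≠ 0 := fun h0 => hP (psi_inj (by rw [h0, map_zero]))
  apply no_poly_relation (psi P) hpsine
  have := DFunLike.congr_fun Th_psi P
  simp only [RingHom.comp_apply] at this
  rw [this, MvPolynomial.coe_eval₂Hom]
  exact hPhi
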